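/- Let X be the infinitesimal generator of positive unit-speed translations along an oriented geodesic l in ℍ² = P(Id) ⊂ X_{-1}. Then the one-parameter family (exp(-tX), exp(tX)) ∈ PSL(2,ℝ) × PSL(2,ℝ), t > 0, consists of rotations around l, and the angle between the plane P(Id) and its image under (exp(-tX), exp(tX)) equals the translation length 2t of exp(tX). -/

import Mathlib

noncomputable section

open Matrix

open scoped Nat

/-- The bilinear form polarizing `-det`, inducing the anti-de Sitter metric on the
quadric `{det = 1}`; `P(Id) = {z : det z = 1, bform z 1 = 0}` is the hyperbolic
plane dual to the identity. -/
def bform (A B : Matrix (Fin 2) (Fin 2) ℝ) : ℝ :=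
  -(((A + B).det - A.det - B.det) / 2)

/-- The inverse hyperbolic cosine. -/
def arcosh (x : ℝ) : ℝ := Real.log (x + Real.sqrt (x^2 - 1))

/-- `bform` in terms of traces. -/
lemma bform_tr (A B : Matrix (Fin 2) (Fin 2) ℝ) :
    bform A B = (Matrix.trace (A * B) - Matrix.trace A * Matrix.trace B) / 2 := by
  simp [bform, Matrix.det_fin_two, Matrix.trace_fin_two, Matrix.mul_apply,
    Fin.sum_univ_two, Matrix.add_apply]
  ring

/-- Closed form for the exponential of a multiple of a square root of one. -/
lemma exp_smul_sq_one (X : Matrix (Fin 2) (Fin 2) ℝ) (hX2 : X * X = 1) (s : ℝ) :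
    NormedSpace.exp (s • X) = Real.cosh s • 1 + Real.sinh s • X := by
  rw [NormedSpace.exp_eq_tsum ℝ]
  refine HasSum.tsum_eq ?_
  have hXe : ∀ k : ℕ, X ^ (2 * k) = 1 := fun k => by
    rw [pow_mul, sq, hX2, one_pow]
  have he : HasSum (fun k : ℕ => ((↑(2 * k)! : ℝ)⁻¹) • (s • X) ^ (2 * k))
      (Real.cosh s • (1 : Matrix (Fin 2) (Fin 2) ℝ)) := by
    convert (Real.hasSum_cosh s).smul_const (1 : Matrix (Fin 2) (Fin 2) ℝ) using 2 with k
    rw [smul_pow, hXe, smul_smul]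
    congr 1
    ring
  have ho : HasSum (fun k : ℕ => ((↑(2 * k + 1)! : ℝ)⁻¹) • (s • X) ^ (2 * k + 1))
      (Real.sinh s • X) := by
    convert (Real.hasSum_sinh s).smul_const X using 2 with k
    rw [smul_pow, pow_succ X, hXe, one_mul, smul_smul]
    congr 1
    ring
  exact HasSum.even_add_odd (f := fun n : ℕ => ((↑n ! : ℝ)⁻¹) • (s • X) ^ n) he ho

/-- Let `X` be the infinitesimal generator of positive unit-speed translations along an
oriented geodesic `l ⊂ P(Id)` (so `X` is traceless with `X² = 1`, and `exp(tX)` is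
hyperbolic of translation length `2t`; the geodesic `l` consists of the trace-free unit
matrices anticommuting with `X`). Then for `t > 0` the pair `(exp(-tX), exp(tX))`,
acting by `z ↦ exp(-tX)·z·exp(tX)⁻¹ = exp(-tX)·z·exp(-tX)`, is a rotation around `l`
(it fixes `l` pointwise), it maps the plane `P(Id)` to the plane dual to `exp(-2tX)`,
and the angle between `P(Id)` and its image — the distance along `l*` between their
dual points `1` and `exp(-2tX)` — equals the translation length `2t` of `exp(tX)`. -/
theorem rotation_angle_equals_translation_length
    (X : Matrix (Fin 2) (Fin 2) ℝ) (htr : Matrix.trace X = 0) (hX2 : X * X = 1)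
    (t : ℝ) (ht : 0 < t) :
    -- `(exp(-tX), exp(tX))` fixes the geodesic `l` pointwise:
    (∀ z : Matrix (Fin 2) (Fin 2) ℝ, z.det = 1 → Matrix.trace z = 0 →
      z * X = -(X * z) →
      NormedSpace.exp (-(t • X)) * z * NormedSpace.exp (-(t • X)) = z) ∧
    -- the image of the plane `P(Id)` is the plane dual to `exp(-2tX)`:
    (∀ z : Matrix (Fin 2) (Fin 2) ℝ, z.det = 1 → bform z 1 = 0 →
      bform (NormedSpace.exp (-(t • X)) * z * NormedSpace.exp (-(t • X)))
        (NormedSpace.exp ((-(2 * t)) • X)) = 0) ∧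
    -- the angle between `P(Id)` and its image equals `2t`:
    -(bform 1 (NormedSpace.exp ((-(2 * t)) • X))) = Real.cosh (2 * t) ∧
    arcosh (-(bform 1 (NormedSpace.exp ((-(2 * t)) • X)))) = 2 * t := by
  set c : ℝ := Real.cosh t with hc
  set s : ℝ := Real.sinh t with hs
  have hcs : c * c - s * s = 1 := by
    have := Real.cosh_sq_sub_sinh_sq t
    nlinarith [this]
  have hE : NormedSpace.exp (-(t • X)) = c • 1 - s • X := by
    rw [← neg_smul, exp_smul_sq_one X hX2 (-t), Real.cosh_neg, Real.sinh_neg, neg_smul,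
      sub_eq_add_neg, hc, hs]
  have hF : NormedSpace.exp ((-(2 * t)) • X) = (c * c + s * s) • 1 - (2 * (c * s)) • X := by
    have h2 : (-(2 * t)) • X = (-t) • X + (-t) • X := by
      rw [← add_smul]; ring_nf
    rw [h2, Matrix.exp_add_of_commute _ _ (Commute.refl _), neg_smul, hE]
    calc (c • 1 - s • X) * (c • 1 - s • X)
        = (c*c) • (1 : Matrix (Fin 2) (Fin 2) ℝ) - (c*s) • X - ((c*s) • X - (s*s) • (X*X)) := by
          simp only [sub_mul, mul_sub, smul_mul_assoc, mul_smul_comm, one_mul, mul_one, smul_smul]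
          module
      _ = (c * c + s * s) • 1 - (2 * (c * s)) • X := by rw [hX2]; module
  -- the generic expansion of the conjugation
  have hW : ∀ z : Matrix (Fin 2) (Fin 2) ℝ,
      NormedSpace.exp (-(t • X)) * z * NormedSpace.exp (-(t • X)) =
        (c*c) • z - (c*s) • (z * X) - ((c*s) • (X * z) - (s*s) • (X * (z * X))) := by
    intro z
    rw [hE]
    simp only [sub_mul, mul_sub, smul_mul_assoc, mul_smul_comm, one_mul, mul_one,
      smul_smul, mul_assoc]
    module
  refine ⟨?_, ?_, ?_, ?_⟩
  · -- rotation fixes the geodesic pointwise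
    intro z _ _ hzX
    have hXzX : X * (z * X) = -z := by
      rw [hzX, mul_neg, ← mul_assoc, hX2, one_mul]
    rw [hW z, hXzX, hzX]
    calc (c*c) • z - (c*s) • -(X * z) - ((c*s) • (X * z) - (s*s) • -z)
        = (c*c - s*s) • z := by module
      _ = z := by rw [hcs, one_smul]
  · -- the image plane is dual to `exp(-2tX)`
    intro z _ hz1
    have htz : Matrix.trace z = 0 := by
      rw [bform_tr, mul_one, Matrix.trace_one] at hz1
      simp at hz1
      linarith
    have h1 : Matrix.trace (X * (z * X)) = 0 := by
      rw [Matrix.trace_mul_comm, mul_assoc, hX2, mul_one, htz]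
    have h2 : Matrix.trace (z * X) = Matrix.trace (X * z) := Matrix.trace_mul_comm z X
    rw [hW z, hF, bform_tr]
    simp only [mul_sub, sub_mul, smul_mul_assoc, mul_smul_comm, smul_smul, mul_one,
      one_mul, mul_assoc, hX2, Matrix.trace_sub, Matrix.trace_smul, smul_eq_mul,
      Matrix.trace_one, htz, htr, h1, h2]
    simp
    ring
  · -- the angle equals `cosh 2t`
    rw [hF, bform_tr]
    simp only [one_mul, Matrix.trace_sub, Matrix.trace_smul, smul_eq_mul, Matrix.trace_one,
      htr, Matrix.trace_one]
    simp [htr]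
    rw [Real.cosh_two_mul]
    nlinarith [hcs]
  · -- arcosh of cosh 2t is 2t
    have h3 : -(bform 1 (NormedSpace.exp ((-(2 * t)) • X))) = Real.cosh (2 * t) := by
      rw [hF, bform_tr]
      simp [htr]
      rw [Real.cosh_two_mul]
      nlinarith [hcs]
    rw [h3, arcosh]
    have h2t : (0:ℝ) < 2 * t := by linarith
    have hsq : Real.cosh (2*t) ^ 2 - 1 = Real.sinh (2*t) ^ 2 := by
      rw [Real.cosh_sq]; ring
    rw [hsq, Real.sqrt_sq (Real.sinh_nonneg_iff.mpr h2t.le), Real.cosh_add_sinh, Real.log_exp]
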